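/- arXiv:2005.08849 — 6 statements merged into one kernel-verified Lean document; each statement's English description precedes it below -/
import Mathlib

section
/- The Minkowski sum of two constrained polynomial zonotopes ⟨c₁,G₁,E₁,A₁,b₁,R₁⟩ and ⟨c₂,G₂,E₂,A₂,b₂,R₂⟩ (with p₁ and p₂ factors respectively) equals the constrained polynomial zonotope ⟨c₁+c₂, [G₁ G₂], blockdiag(E₁,E₂), blockdiag(A₁,A₂), [b₁;b₂], blockdiag(R₁,R₂)⟩ with p₁+p₂ factors. -/
open Finset Matrix Set

noncomputable section

/-- Monomial `∏ k, α k ^ e k`. -/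
def mono {p : Type*} [Fintype p] (α : p → ℝ) (e : p → ℕ) : ℝ := ∏ k, α k ^ e k

/-- All factors lie in `[-1,1]`. -/
def inBox {p : Type*} (α : p → ℝ) : Prop := ∀ k, α k ∈ Set.Icc (-1 : ℝ) 1

/-- Constrained polynomial zonotope. -/
def CPZ {n p h m q : Type*} [Fintype n] [Fintype p] [Fintype h] [Fintype m] [Fintype q]
    (c : n → ℝ) (G : Matrix n h ℝ) (E : Matrix p h ℕ)
    (A : Matrix m q ℝ) (b : m → ℝ) (R : Matrix p q ℕ) : Set (n → ℝ) :=
  {x | ∃ α : p → ℝ, inBox α ∧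
    (∑ i, mono α (fun k => R k i) • (fun j => A j i)) = b ∧
    x = c + ∑ i, mono α (fun k => E k i) • (fun j => G j i)}

lemma mono_blockL {p₁ p₂ h₁ h₂ : Type*} [Fintype p₁] [Fintype p₂]
    (α : p₁ ⊕ p₂ → ℝ) (E₁ : Matrix p₁ h₁ ℕ) (E₂ : Matrix p₂ h₂ ℕ) (i : h₁) :
    mono α (fun k => Matrix.fromBlocks E₁ 0 0 E₂ k (Sum.inl i))
      = mono (α ∘ Sum.inl) (fun k => E₁ k i) := by
  simp [mono, Fintype.prod_sum_type]

lemma mono_blockR {p₁ p₂ h₁ h₂ : Type*} [Fintype p₁] [Fintype p₂]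
    (α : p₁ ⊕ p₂ → ℝ) (E₁ : Matrix p₁ h₁ ℕ) (E₂ : Matrix p₂ h₂ ℕ) (i : h₂) :
    mono α (fun k => Matrix.fromBlocks E₁ 0 0 E₂ k (Sum.inr i))
      = mono (α ∘ Sum.inr) (fun k => E₂ k i) := by
  simp [mono, Fintype.prod_sum_type]

/-- Minkowski sum of two CPZs. -/
theorem CPZ_minkowski_sum {n p₁ p₂ h₁ h₂ m₁ m₂ q₁ q₂ : ℕ}
    (c₁ : Fin n → ℝ) (G₁ : Matrix (Fin n) (Fin h₁) ℝ) (E₁ : Matrix (Fin p₁) (Fin h₁) ℕ)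
    (A₁ : Matrix (Fin m₁) (Fin q₁) ℝ) (b₁ : Fin m₁ → ℝ) (R₁ : Matrix (Fin p₁) (Fin q₁) ℕ)
    (c₂ : Fin n → ℝ) (G₂ : Matrix (Fin n) (Fin h₂) ℝ) (E₂ : Matrix (Fin p₂) (Fin h₂) ℕ)
    (A₂ : Matrix (Fin m₂) (Fin q₂) ℝ) (b₂ : Fin m₂ → ℝ) (R₂ : Matrix (Fin p₂) (Fin q₂) ℕ) :
    {x : Fin n → ℝ | ∃ s₁ ∈ CPZ c₁ G₁ E₁ A₁ b₁ R₁, ∃ s₂ ∈ CPZ c₂ G₂ E₂ A₂ b₂ R₂,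
      x = s₁ + s₂} =
    CPZ (c₁ + c₂) (Matrix.fromCols G₁ G₂) (Matrix.fromBlocks E₁ 0 0 E₂)
      (Matrix.fromBlocks A₁ 0 0 A₂) (Sum.elim b₁ b₂) (Matrix.fromBlocks R₁ 0 0 R₂) := by
  ext x
  simp only [Set.mem_setOf_eq, CPZ]
  constructor
  · rintro ⟨s₁, ⟨α₁, hb₁, hA₁, rfl⟩, s₂, ⟨α₂, hb₂, hA₂, rfl⟩, rfl⟩
    refine ⟨Sum.elim α₁ α₂, fun k => by cases k with
      | inl k => exact hb₁ k
      | inr k => exact hb₂ k, ?_, ?_⟩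
    · funext j
      cases j with
      | inl j =>
        have := congrFun hA₁ j
        simp only [Finset.sum_apply, Pi.smul_apply, smul_eq_mul] at this ⊢
        rw [Fintype.sum_sum_type]
        simpa [mono_blockL, mono_blockR] using this
      | inr j =>
        have := congrFun hA₂ j
        simp only [Finset.sum_apply, Pi.smul_apply, smul_eq_mul] at this ⊢
        rw [Fintype.sum_sum_type]
        simpa [mono_blockL, mono_blockR] using this
    · funext j
      simp only [Pi.add_apply, Finset.sum_apply, Pi.smul_apply, smul_eq_mul]
      rw [Fintype.sum_sum_type]
      simp [mono_blockL, mono_blockR, Matrix.fromCols]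
      ring
  · rintro ⟨α, hbox, hA, rfl⟩
    refine ⟨c₁ + ∑ i, mono (α ∘ Sum.inl) (fun k => E₁ k i) • (fun j => G₁ j i),
      ⟨α ∘ Sum.inl, fun k => hbox _, ?_, rfl⟩,
      c₂ + ∑ i, mono (α ∘ Sum.inr) (fun k => E₂ k i) • (fun j => G₂ j i),
      ⟨α ∘ Sum.inr, fun k => hbox _, ?_, rfl⟩, ?_⟩
    · funext j
      have := congrFun hA (Sum.inl j)
      simp only [Finset.sum_apply, Pi.smul_apply, smul_eq_mul] at this ⊢
      rw [Fintype.sum_sum_type] at this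
      simpa [mono_blockL, mono_blockR] using this
    · funext j
      have := congrFun hA (Sum.inr j)
      simp only [Finset.sum_apply, Pi.smul_apply, smul_eq_mul] at this ⊢
      rw [Fintype.sum_sum_type] at this
      simpa [mono_blockL, mono_blockR] using this
    · funext j
      simp only [Pi.add_apply, Finset.sum_apply, Pi.smul_apply, smul_eq_mul]
      rw [Fintype.sum_sum_type]
      simp [mono_blockL, mono_blockR, Matrix.fromCols]
      ring
end
end

section
/- The Cartesian product of two constrained polynomial zonotopes ⟨c₁,G₁,E₁,A₁,b₁,R₁⟩ ⊂ ℝⁿ and ⟨c₂,G₂,E₂,A₂,b₂,R₂⟩ ⊂ ℝ^w equals the constrained polynomial zonotope ⟨[c₁;c₂], blockdiag(G₁,G₂), blockdiag(E₁,E₂), blockdiag(A₁,A₂), [b₁;b₂], blockdiag(R₁,R₂)⟩ ⊂ ℝ^{n+w}. -/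
open Finset Matrix Set

noncomputable section

lemma mono_blocks_left {p₁ p₂ h₁ h₂ : Type*} [Fintype p₁] [Fintype p₂] [Fintype h₁] [Fintype h₂]
    (α₁ : p₁ → ℝ) (α₂ : p₂ → ℝ) (E₁ : Matrix p₁ h₁ ℕ) (E₂ : Matrix p₂ h₂ ℕ) (i : h₁) :
    mono (Sum.elim α₁ α₂) (fun k => Matrix.fromBlocks E₁ 0 0 E₂ k (Sum.inl i)) =
      mono α₁ (fun k => E₁ k i) := by
  simp [mono, Fintype.prod_sum_type, Matrix.fromBlocks]

lemma mono_blocks_right {p₁ p₂ h₁ h₂ : Type*} [Fintype p₁] [Fintype p₂] [Fintype h₁] [Fintype h₂]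
    (α₁ : p₁ → ℝ) (α₂ : p₂ → ℝ) (E₁ : Matrix p₁ h₁ ℕ) (E₂ : Matrix p₂ h₂ ℕ) (i : h₂) :
    mono (Sum.elim α₁ α₂) (fun k => Matrix.fromBlocks E₁ 0 0 E₂ k (Sum.inr i)) =
      mono α₂ (fun k => E₂ k i) := by
  simp [mono, Fintype.prod_sum_type, Matrix.fromBlocks]

/-- Cartesian product of two CPZs. -/
theorem CPZ_cartesian_product {n w p₁ p₂ h₁ h₂ m₁ m₂ q₁ q₂ : ℕ}
    (c₁ : Fin n → ℝ) (G₁ : Matrix (Fin n) (Fin h₁) ℝ) (E₁ : Matrix (Fin p₁) (Fin h₁) ℕ)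
    (A₁ : Matrix (Fin m₁) (Fin q₁) ℝ) (b₁ : Fin m₁ → ℝ) (R₁ : Matrix (Fin p₁) (Fin q₁) ℕ)
    (c₂ : Fin w → ℝ) (G₂ : Matrix (Fin w) (Fin h₂) ℝ) (E₂ : Matrix (Fin p₂) (Fin h₂) ℕ)
    (A₂ : Matrix (Fin m₂) (Fin q₂) ℝ) (b₂ : Fin m₂ → ℝ) (R₂ : Matrix (Fin p₂) (Fin q₂) ℕ) :
    {x : Fin n ⊕ Fin w → ℝ | ∃ s₁ ∈ CPZ c₁ G₁ E₁ A₁ b₁ R₁, ∃ s₂ ∈ CPZ c₂ G₂ E₂ A₂ b₂ R₂,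
      x = Sum.elim s₁ s₂} =
    CPZ (Sum.elim c₁ c₂) (Matrix.fromBlocks G₁ 0 0 G₂) (Matrix.fromBlocks E₁ 0 0 E₂)
      (Matrix.fromBlocks A₁ 0 0 A₂) (Sum.elim b₁ b₂) (Matrix.fromBlocks R₁ 0 0 R₂) := by
  ext x
  simp only [Set.mem_setOf_eq, CPZ]
  constructor
  · rintro ⟨s₁, ⟨α₁, hbox₁, hcon₁, hs₁⟩, s₂, ⟨α₂, hbox₂, hcon₂, hs₂⟩, rfl⟩
    refine ⟨Sum.elim α₁ α₂, ?_, ?_, ?_⟩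
    · rintro (k | k)
      exacts [hbox₁ k, hbox₂ k]
    · funext j
      rw [Fintype.sum_sum_type]
      cases j with
      | inl j =>
        have h1 := congrFun hcon₁ j
        simp only [Pi.add_apply, Finset.sum_apply, Pi.smul_apply, smul_eq_mul] at h1 ⊢
        simp only [mono_blocks_left α₁ α₂,
          mono_blocks_right α₁ α₂, Matrix.fromBlocks_apply₁₁,
          Matrix.fromBlocks_apply₁₂, Matrix.zero_apply, mul_zero, Finset.sum_const_zero,
          add_zero, Sum.elim_inl]
        exact h1
      | inr j =>
        have h2 := congrFun hcon₂ j
        simp only [Pi.add_apply, Finset.sum_apply, Pi.smul_apply, smul_eq_mul] at h2 ⊢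
        simp only [mono_blocks_left α₁ α₂,
          mono_blocks_right α₁ α₂, Matrix.fromBlocks_apply₂₁,
          Matrix.fromBlocks_apply₂₂, Matrix.zero_apply, mul_zero, Finset.sum_const_zero,
          zero_add, Sum.elim_inr]
        exact h2
    · funext j
      rw [Pi.add_apply, Fintype.sum_sum_type]
      cases j with
      | inl j =>
        have h1 := congrFun hs₁ j
        simp only [Pi.add_apply, Finset.sum_apply, Pi.smul_apply, smul_eq_mul] at h1 ⊢
        simp only [mono_blocks_left α₁ α₂,
          mono_blocks_right α₁ α₂, Matrix.fromBlocks_apply₁₁,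
          Matrix.fromBlocks_apply₁₂, Matrix.zero_apply, mul_zero, Finset.sum_const_zero,
          add_zero, Sum.elim_inl]
        exact h1
      | inr j =>
        have h2 := congrFun hs₂ j
        simp only [Pi.add_apply, Finset.sum_apply, Pi.smul_apply, smul_eq_mul] at h2 ⊢
        simp only [mono_blocks_left α₁ α₂,
          mono_blocks_right α₁ α₂, Matrix.fromBlocks_apply₂₁,
          Matrix.fromBlocks_apply₂₂, Matrix.zero_apply, mul_zero, Finset.sum_const_zero,
          zero_add, Sum.elim_inr]
        exact h2
  · rintro ⟨α, hbox, hcon, hx⟩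
    have hα : α = Sum.elim (α ∘ Sum.inl) (α ∘ Sum.inr) := by
      funext k; cases k <;> rfl
    rw [hα] at hcon hx
    set α₁ := α ∘ Sum.inl
    set α₂ := α ∘ Sum.inr
    refine ⟨fun j => x (Sum.inl j), ⟨α₁, fun k => hbox _, ?_, ?_⟩,
            fun j => x (Sum.inr j), ⟨α₂, fun k => hbox _, ?_, ?_⟩, ?_⟩
    · funext j
      have h1 := congrFun hcon (Sum.inl j)
      rw [Fintype.sum_sum_type] at h1
      simp only [Finset.sum_apply, Pi.smul_apply, smul_eq_mul, Sum.elim_inl,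
        mono_blocks_left α₁ α₂, mono_blocks_right α₁ α₂,
        Matrix.fromBlocks_apply₁₁, Matrix.fromBlocks_apply₁₂, Matrix.zero_apply, mul_zero,
        Finset.sum_const_zero, add_zero] at h1
      simpa using h1
    · funext j
      have h1 := congrFun hx (Sum.inl j)
      rw [Pi.add_apply, Fintype.sum_sum_type] at h1
      simp only [Finset.sum_apply, Pi.smul_apply, smul_eq_mul, Sum.elim_inl,
        mono_blocks_left α₁ α₂, mono_blocks_right α₁ α₂,
        Matrix.fromBlocks_apply₁₁, Matrix.fromBlocks_apply₁₂, Matrix.zero_apply, mul_zero,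
        Finset.sum_const_zero, add_zero] at h1
      simpa using h1
    · funext j
      have h2 := congrFun hcon (Sum.inr j)
      rw [Fintype.sum_sum_type] at h2
      simp only [Finset.sum_apply, Pi.smul_apply, smul_eq_mul, Sum.elim_inr,
        mono_blocks_left α₁ α₂, mono_blocks_right α₁ α₂,
        Matrix.fromBlocks_apply₂₁, Matrix.fromBlocks_apply₂₂, Matrix.zero_apply, mul_zero,
        Finset.sum_const_zero, zero_add] at h2
      simpa using h2
    · funext j
      have h2 := congrFun hx (Sum.inr j)
      rw [Pi.add_apply, Fintype.sum_sum_type] at h2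
      simp only [Finset.sum_apply, Pi.smul_apply, smul_eq_mul, Sum.elim_inr,
        mono_blocks_left α₁ α₂, mono_blocks_right α₁ α₂,
        Matrix.fromBlocks_apply₂₁, Matrix.fromBlocks_apply₂₂, Matrix.zero_apply, mul_zero,
        Finset.sum_const_zero, zero_add] at h2
      simpa using h2
    · funext j
      cases j <;> rfl
end
end

section
/- The convex hull operation conv(S₁,S₂) = { ½(1+λ)s₁ + ½(1-λ)s₂ : s₁ ∈ S₁, s₂ ∈ S₂, λ ∈ [-1,1] } applied to two CPZs ⟨c₁,G₁,E₁,A₁,b₁,R₁⟩ and ⟨c₂,G₂,E₂,A₂,b₂,R₂⟩ equals the CPZ with starting point ½(c₁+c₂), generator matrix ½[(c₁-c₂) G₁ G₁ G₂ -G₂], exponent matrix with p₁+p₂+1 rows whose columns correspond to: the new factor λ alone; E₁ columns; E₁ columns with λ-exponent 1 added; E₂ columns; E₂ columns with λ-exponent 1 added; and constraints blockdiag(A₁,A₂), [b₁;b₂], [[R₁,0],[0,R₂],[0,0]]. -/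
open Finset Matrix Set

noncomputable section

variable {n p₁ p₂ h₁ h₂ m₁ m₂ q₁ q₂ : ℕ}

/-- Generator matrix ½ [(c₁-c₂) G₁ G₁ G₂ -G₂] of the convex-hull CPZ. -/
def chG (c₁ c₂ : Fin n → ℝ) (G₁ : Matrix (Fin n) (Fin h₁) ℝ) (G₂ : Matrix (Fin n) (Fin h₂) ℝ) :
    Matrix (Fin n) (Unit ⊕ (Fin h₁ ⊕ Fin h₁) ⊕ (Fin h₂ ⊕ Fin h₂)) ℝ :=
  fun i j => (1 / 2) * match j with
    | .inl _ => c₁ i - c₂ i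
    | .inr (.inl (.inl jj)) => G₁ i jj
    | .inr (.inl (.inr jj)) => G₁ i jj
    | .inr (.inr (.inl jj)) => G₂ i jj
    | .inr (.inr (.inr jj)) => -G₂ i jj

/-- Exponent matrix of the convex-hull CPZ; the extra factor (index `Sum.inr ()`) is λ. -/
def chE (E₁ : Matrix (Fin p₁) (Fin h₁) ℕ) (E₂ : Matrix (Fin p₂) (Fin h₂) ℕ) :
    Matrix ((Fin p₁ ⊕ Fin p₂) ⊕ Unit) (Unit ⊕ (Fin h₁ ⊕ Fin h₁) ⊕ (Fin h₂ ⊕ Fin h₂)) ℕ :=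
  fun k j => match k, j with
    | .inl (.inl kk), .inr (.inl (.inl jj)) => E₁ kk jj
    | .inl (.inl kk), .inr (.inl (.inr jj)) => E₁ kk jj
    | .inl (.inr kk), .inr (.inr (.inl jj)) => E₂ kk jj
    | .inl (.inr kk), .inr (.inr (.inr jj)) => E₂ kk jj
    | .inr _, .inl _ => 1
    | .inr _, .inr (.inl (.inr _)) => 1
    | .inr _, .inr (.inr (.inr _)) => 1
    | _, _ => 0

/-- Constraint exponent matrix [[R₁,0],[0,R₂],[0,0]] of the convex-hull CPZ. -/
def chR (R₁ : Matrix (Fin p₁) (Fin q₁) ℕ) (R₂ : Matrix (Fin p₂) (Fin q₂) ℕ) :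
    Matrix ((Fin p₁ ⊕ Fin p₂) ⊕ Unit) (Fin q₁ ⊕ Fin q₂) ℕ :=
  fun k j => match k with
    | .inl kk => Matrix.fromBlocks R₁ 0 0 R₂ kk j
    | .inr _ => 0


lemma mono_split {pa pb : Type*} [Fintype pa] [Fintype pb]
    (α : (pa ⊕ pb) ⊕ Unit → ℝ) (e : (pa ⊕ pb) ⊕ Unit → ℕ) :
    mono α e = mono (fun k => α (.inl (.inl k))) (fun k => e (.inl (.inl k))) *
      mono (fun k => α (.inl (.inr k))) (fun k => e (.inl (.inr k))) *
      α (.inr ()) ^ e (.inr ()) := by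
  simp [mono, Fintype.prod_sum_type]

/-- Convex hull of two CPZs. -/
theorem CPZ_convex_hull
    (c₁ : Fin n → ℝ) (G₁ : Matrix (Fin n) (Fin h₁) ℝ) (E₁ : Matrix (Fin p₁) (Fin h₁) ℕ)
    (A₁ : Matrix (Fin m₁) (Fin q₁) ℝ) (b₁ : Fin m₁ → ℝ) (R₁ : Matrix (Fin p₁) (Fin q₁) ℕ)
    (c₂ : Fin n → ℝ) (G₂ : Matrix (Fin n) (Fin h₂) ℝ) (E₂ : Matrix (Fin p₂) (Fin h₂) ℕ)
    (A₂ : Matrix (Fin m₂) (Fin q₂) ℝ) (b₂ : Fin m₂ → ℝ) (R₂ : Matrix (Fin p₂) (Fin q₂) ℕ) :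
    {x : Fin n → ℝ | ∃ s₁ ∈ CPZ c₁ G₁ E₁ A₁ b₁ R₁, ∃ s₂ ∈ CPZ c₂ G₂ E₂ A₂ b₂ R₂,
      ∃ lam ∈ Set.Icc (-1 : ℝ) 1,
      x = ((1 / 2) * (1 + lam)) • s₁ + ((1 / 2) * (1 - lam)) • s₂} =
    CPZ ((1 / 2 : ℝ) • (c₁ + c₂)) (chG c₁ c₂ G₁ G₂) (chE E₁ E₂)
      (Matrix.fromBlocks A₁ 0 0 A₂) (Sum.elim b₁ b₂) (chR R₁ R₂) := by
  ext x
  simp only [Set.mem_setOf_eq, CPZ]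
  constructor
  · rintro ⟨s₁, ⟨α₁, hb₁, hc₁, hs₁⟩, s₂, ⟨α₂, hb₂, hc₂, hs₂⟩, lam, hlam, hx⟩
    refine ⟨Sum.elim (Sum.elim α₁ α₂) (fun _ => lam), ?_, ?_, ?_⟩
    · rintro ((k | k) | k)
      exacts [hb₁ k, hb₂ k, hlam]
    · funext j
      have h1 := congrFun hc₁
      have h2 := congrFun hc₂
      simp only [Finset.sum_apply, Pi.smul_apply, smul_eq_mul] at h1 h2 ⊢
      simp only [Fintype.sum_sum_type, mono_split]
      rcases j with j | j
      · simp only [chR, Sum.elim_inl, Sum.elim_inr, Matrix.fromBlocks_apply₁₁,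
          Matrix.fromBlocks_apply₁₂, Matrix.fromBlocks_apply₂₁, Matrix.fromBlocks_apply₂₂,
          Matrix.zero_apply, pow_zero, mul_one, mul_zero, Finset.sum_const_zero, add_zero]
        simp only [show (mono α₂ fun _ => (0:ℕ)) = 1 from by simp [mono], mul_one]
        exact h1 j
      · simp only [chR, Sum.elim_inl, Sum.elim_inr, Matrix.fromBlocks_apply₁₁,
          Matrix.fromBlocks_apply₁₂, Matrix.fromBlocks_apply₂₁, Matrix.fromBlocks_apply₂₂,
          Matrix.zero_apply, pow_zero, mul_one, mul_zero, Finset.sum_const_zero, zero_add]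
        simp only [show (mono α₁ fun _ => (0:ℕ)) = 1 from by simp [mono], one_mul]
        exact h2 j
    · subst hx hs₁ hs₂
      funext j
      simp only [Pi.add_apply, Pi.smul_apply, Finset.sum_apply, smul_eq_mul]
      simp only [Fintype.sum_sum_type, mono_split, chE, chG, Sum.elim_inl, Sum.elim_inr,
        pow_zero, pow_one, mul_one, one_mul, Finset.univ_unique, Finset.sum_singleton,
        show (mono α₁ fun _ => (0:ℕ)) = 1 from by simp [mono],
        show (mono α₂ fun _ => (0:ℕ)) = 1 from by simp [mono]]
      have t1 : ∑ x : Fin h₁, (mono α₁ fun k => E₁ k x) * (1 / 2 * G₁ j x)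
          = 1 / 2 * ∑ x : Fin h₁, (mono α₁ fun k => E₁ k x) * G₁ j x := by
        rw [Finset.mul_sum]; exact Finset.sum_congr rfl fun i _ => by ring
      have t2 : ∑ x : Fin h₁, (mono α₁ fun k => E₁ k x) * lam * (1 / 2 * G₁ j x)
          = lam * (1 / 2 * ∑ x : Fin h₁, (mono α₁ fun k => E₁ k x) * G₁ j x) := by
        rw [Finset.mul_sum, Finset.mul_sum]; exact Finset.sum_congr rfl fun i _ => by ring
      have t3 : ∑ x : Fin h₂, (mono α₂ fun k => E₂ k x) * (1 / 2 * G₂ j x)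
          = 1 / 2 * ∑ x : Fin h₂, (mono α₂ fun k => E₂ k x) * G₂ j x := by
        rw [Finset.mul_sum]; exact Finset.sum_congr rfl fun i _ => by ring
      have t4 : ∑ x : Fin h₂, (mono α₂ fun k => E₂ k x) * lam * (1 / 2 * -G₂ j x)
          = -(lam * (1 / 2 * ∑ x : Fin h₂, (mono α₂ fun k => E₂ k x) * G₂ j x)) := by
        rw [Finset.mul_sum, Finset.mul_sum, ← Finset.sum_neg_distrib]
        exact Finset.sum_congr rfl fun i _ => by ring
      rw [t1, t2, t3, t4]; ring
  · rintro ⟨α, hbox, hcon, hx⟩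
    refine ⟨c₁ + ∑ i, (mono (fun k => α (.inl (.inl k))) fun k => E₁ k i) • fun j => G₁ j i,
      ⟨fun k => α (.inl (.inl k)), fun k => hbox _, ?_, rfl⟩,
      c₂ + ∑ i, (mono (fun k => α (.inl (.inr k))) fun k => E₂ k i) • fun j => G₂ j i,
      ⟨fun k => α (.inl (.inr k)), fun k => hbox _, ?_, rfl⟩,
      α (.inr ()), hbox _, ?_⟩
    · funext j
      have h := congrFun hcon (Sum.inl j)
      simp only [Finset.sum_apply, Pi.smul_apply, smul_eq_mul, Fintype.sum_sum_type,
        mono_split, chR, Sum.elim_inl, Sum.elim_inr, Matrix.fromBlocks_apply₁₁,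
        Matrix.fromBlocks_apply₁₂, Matrix.fromBlocks_apply₂₁, Matrix.fromBlocks_apply₂₂,
        Matrix.zero_apply, pow_zero, mul_one, mul_zero, Finset.sum_const_zero, add_zero,
        show (mono (fun k => α (.inl (.inr k))) fun _ => (0:ℕ)) = 1 from by simp [mono]] at h ⊢
      exact h
    · funext j
      have h := congrFun hcon (Sum.inr j)
      simp only [Finset.sum_apply, Pi.smul_apply, smul_eq_mul, Fintype.sum_sum_type,
        mono_split, chR, Sum.elim_inl, Sum.elim_inr, Matrix.fromBlocks_apply₁₁,
        Matrix.fromBlocks_apply₁₂, Matrix.fromBlocks_apply₂₁, Matrix.fromBlocks_apply₂₂,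
        Matrix.zero_apply, pow_zero, mul_one, one_mul, mul_zero, Finset.sum_const_zero,
        zero_add,
        show (mono (fun k => α (.inl (.inl k))) fun _ => (0:ℕ)) = 1 from by simp [mono]] at h ⊢
      exact h
    · subst hx
      funext j
      simp only [Pi.add_apply, Pi.smul_apply, Finset.sum_apply, smul_eq_mul,
        Fintype.sum_sum_type, mono_split, chE, chG, Sum.elim_inl, Sum.elim_inr,
        pow_zero, pow_one, mul_one, one_mul, Finset.univ_unique, Finset.sum_singleton,
        show (mono (fun k => α (.inl (.inl k))) fun _ => (0:ℕ)) = 1 from by simp [mono],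
        show (mono (fun k => α (.inl (.inr k))) fun _ => (0:ℕ)) = 1 from by simp [mono]]
      have t1 : ∑ x : Fin h₁, (mono (fun k => α (.inl (.inl k))) fun k => E₁ k x) * (1 / 2 * G₁ j x)
          = 1 / 2 * ∑ x : Fin h₁, (mono (fun k => α (.inl (.inl k))) fun k => E₁ k x) * G₁ j x := by
        rw [Finset.mul_sum]; exact Finset.sum_congr rfl fun i _ => by ring
      have t2 : ∑ x : Fin h₁, (mono (fun k => α (.inl (.inl k))) fun k => E₁ k x) * α (.inr ()) * (1 / 2 * G₁ j x)
          = α (.inr ()) * (1 / 2 * ∑ x : Fin h₁, (mono (fun k => α (.inl (.inl k))) fun k => E₁ k x) * G₁ j x) := by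
        rw [Finset.mul_sum, Finset.mul_sum]; exact Finset.sum_congr rfl fun i _ => by ring
      have t3 : ∑ x : Fin h₂, (mono (fun k => α (.inl (.inr k))) fun k => E₂ k x) * (1 / 2 * G₂ j x)
          = 1 / 2 * ∑ x : Fin h₂, (mono (fun k => α (.inl (.inr k))) fun k => E₂ k x) * G₂ j x := by
        rw [Finset.mul_sum]; exact Finset.sum_congr rfl fun i _ => by ring
      have t4 : ∑ x : Fin h₂, (mono (fun k => α (.inl (.inr k))) fun k => E₂ k x) * α (.inr ()) * (1 / 2 * -G₂ j x)
          = -(α (.inr ()) * (1 / 2 * ∑ x : Fin h₂, (mono (fun k => α (.inl (.inr k))) fun k => E₂ k x) * G₂ j x)) := by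
        rw [Finset.mul_sum, Finset.mul_sum, ← Finset.sum_neg_distrib]
        exact Finset.sum_congr rfl fun i _ => by ring
      rw [t1, t2, t3, t4]; ring
end
end

section
/- The quadratic map of a CPZ is a CPZ: given CPZ = ⟨c,G,E,A,b,R⟩ ⊂ ℝⁿ and matrices Q₁,…,Q_w ∈ ℝ^{n×n}, the set sq(Q,CPZ) = { x ∈ ℝ^w : x_i = sᵀQ_i s, s ∈ CPZ } equals the CPZ with starting point c̄ where c̄_i = cᵀQ_i c, generator matrix [Ĝ₁ Ĝ₂ Ḡ₁ … Ḡ_h] where Ĝ₁ has rows cᵀQ_iG, Ĝ₂ has rows GᵀQ_i c (transposed appropriately), and Ḡ_j has rows G_{·,j}ᵀ Q_i G, exponent matrix [E E Ē₁ … Ē_h] with Ē_j = E + E_{·,j}·𝟙ᵀ (adding E_{·,j} to each column of E), and unchanged constraints A, b, R. -/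
open Finset Matrix Set

noncomputable section

variable {n w p h m q : ℕ}

/-- Generator matrix [Ĝ₁ Ĝ₂ Ḡ₁ … Ḡ_h] of the quadratic-map CPZ. -/
def sqG (Q : Fin w → Matrix (Fin n) (Fin n) ℝ) (c : Fin n → ℝ)
    (G : Matrix (Fin n) (Fin h) ℝ) :
    Matrix (Fin w) (Fin h ⊕ Fin h ⊕ Fin h × Fin h) ℝ :=
  fun i col => match col with
    | .inl l => c ⬝ᵥ (Q i *ᵥ fun r => G r l)
    | .inr (.inl j) => (fun r => G r j) ⬝ᵥ (Q i *ᵥ c)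
    | .inr (.inr (j, l)) => (fun r => G r j) ⬝ᵥ (Q i *ᵥ fun r => G r l)

/-- Exponent matrix [E E Ē₁ … Ē_h] of the quadratic-map CPZ, with
Ē_j obtained by adding the j-th column of E to every column of E. -/
def sqE (E : Matrix (Fin p) (Fin h) ℕ) :
    Matrix (Fin p) (Fin h ⊕ Fin h ⊕ Fin h × Fin h) ℕ :=
  fun k col => match col with
    | .inl l => E k l
    | .inr (.inl j) => E k j
    | .inr (.inr (j, l)) => E k j + E k l

lemma mono_add {p : Type*} [Fintype p] (α : p → ℝ) (e f : p → ℕ) :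
    mono α (fun k => e k + f k) = mono α e * mono α f := by
  simp [mono, pow_add, Finset.prod_mul_distrib]

lemma dp_sum {n h : ℕ} (u : Fin n → ℝ) (v : Fin h → Fin n → ℝ) :
    u ⬝ᵥ (∑ l, v l) = ∑ l, u ⬝ᵥ v l := by
  simp only [dotProduct, Finset.sum_apply, Finset.mul_sum]
  exact Finset.sum_comm

lemma sum_dp {n h : ℕ} (u : Fin n → ℝ) (v : Fin h → Fin n → ℝ) :
    (∑ l, v l) ⬝ᵥ u = ∑ l, v l ⬝ᵥ u := by
  simp only [dotProduct, Finset.sum_apply, Finset.sum_mul]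
  exact Finset.sum_comm

lemma mv_sum {n h : ℕ} (M : Matrix (Fin n) (Fin n) ℝ) (v : Fin h → Fin n → ℝ) :
    M *ᵥ (∑ l, v l) = ∑ l, M *ᵥ v l := by
  funext i
  simp only [mulVec, Finset.sum_apply]
  exact dp_sum _ _

lemma quad_expand {n h : ℕ} (M : Matrix (Fin n) (Fin n) ℝ) (c : Fin n → ℝ)
    (f : Fin h → (Fin n → ℝ)) (m : Fin h → ℝ) :
    (c + ∑ l, m l • f l) ⬝ᵥ (M *ᵥ (c + ∑ l, m l • f l)) =
    c ⬝ᵥ (M *ᵥ c) + (∑ l, m l * (c ⬝ᵥ (M *ᵥ f l))) + (∑ j, m j * (f j ⬝ᵥ (M *ᵥ c)))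
      + ∑ j, ∑ l, (m j * m l) * (f j ⬝ᵥ (M *ᵥ f l)) := by
  simp only [mulVec_add, dotProduct_add, add_dotProduct, mv_sum, dp_sum, sum_dp,
    mulVec_smul, dotProduct_smul, smul_dotProduct, smul_eq_mul, smul_smul]
  have hd : (∑ x : Fin h, m x * ∑ y : Fin h, m y * f y ⬝ᵥ M *ᵥ f x)
      = ∑ j : Fin h, ∑ l : Fin h, m j * m l * f j ⬝ᵥ M *ᵥ f l := by
    simp only [Finset.mul_sum]
    rw [Finset.sum_comm]
    exact Finset.sum_congr rfl fun j _ => Finset.sum_congr rfl fun l _ => by ring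
  rw [hd]; ring

lemma key (Q : Fin w → Matrix (Fin n) (Fin n) ℝ)
    (c : Fin n → ℝ) (G : Matrix (Fin n) (Fin h) ℝ) (E : Matrix (Fin p) (Fin h) ℕ)
    (α : Fin p → ℝ) (i : Fin w) :
    (c + ∑ l, mono α (fun k => E k l) • (fun j => G j l)) ⬝ᵥ
      (Q i *ᵥ (c + ∑ l, mono α (fun k => E k l) • (fun j => G j l))) =
    ((fun i => c ⬝ᵥ (Q i *ᵥ c)) +
      ∑ col, mono α (fun k => sqE E k col) • (fun j => sqG Q c G j col)) i := by
  rw [quad_expand]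
  simp only [Pi.add_apply, Finset.sum_apply, Pi.smul_apply, smul_eq_mul,
    Fintype.sum_sum_type, Fintype.sum_prod_type, sqE, sqG, mono_add]
  ring_nf

/-- The quadratic map of a CPZ is a CPZ. -/
theorem CPZ_quadratic_map (Q : Fin w → Matrix (Fin n) (Fin n) ℝ)
    (c : Fin n → ℝ) (G : Matrix (Fin n) (Fin h) ℝ) (E : Matrix (Fin p) (Fin h) ℕ)
    (A : Matrix (Fin m) (Fin q) ℝ) (b : Fin m → ℝ) (R : Matrix (Fin p) (Fin q) ℕ) :
    {x : Fin w → ℝ | ∃ s ∈ CPZ c G E A b R, ∀ i, x i = s ⬝ᵥ (Q i *ᵥ s)} =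
    CPZ (fun i => c ⬝ᵥ (Q i *ᵥ c)) (sqG Q c G) (sqE E) A b R := by
  ext x
  simp only [Set.mem_setOf_eq, CPZ]
  constructor
  · rintro ⟨s, ⟨α, hα, hc, hs⟩, hx⟩
    exact ⟨α, hα, hc, funext fun i => by rw [hx i, hs, key]⟩
  · rintro ⟨α, hα, hc, hx⟩
    exact ⟨c + ∑ l, mono α (fun k => E k l) • (fun j => G j l), ⟨α, hα, hc, rfl⟩,
      fun i => by rw [hx, key]⟩
end
end

section
/- The union of two constrained polynomial zonotopes is a constrained polynomial zonotope: for any two CPZs CPZ₁ and CPZ₂ with regular exponent and constraint exponent matrices (no zero columns), there exists a CPZ with p₁+p₂+2 factors whose set equals CPZ₁ ∪ CPZ₂, obtained by adding two switching factors α₁,α₂ with the constraint α₁α₂ = 1 and a polynomial constraint g(α) = (1 + α₁ + ½f₁(α)(1-α₁))(1 - ½f₂(α)) - α₂ - 1 = 0 where f₁(α) = (1/p₁)Σ_{i=3}^{p₁+2} α_i² and f₂(α) = (1/p₂)Σ_{i=p₁+3}^{p₁+p₂+2} α_i², together with the constraints Σ α^{R₁} A₁ = ½b₁ + ½b₁α₁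 and Σ α^{R₂} A₂ = ½b₂ - ½b₂α₁, starting point ½(c₁+c₂), and generators [½(c₁-c₂) G₁ G₂] with exponent matrix placing α₁ on the first generator, E₁ on the G₁ block, and E₂ on the G₂ block. -/
open Finset Matrix Set

noncomputable section

lemma mono_zero_of_ne {p : ℕ} (e : Fin p → ℕ) (he : e ≠ 0) :
    mono (0 : Fin p → ℝ) e = 0 := by
  obtain ⟨k, hk⟩ := Function.ne_iff.mp he
  exact Finset.prod_eq_zero (Finset.mem_univ k) (by simpa using (zero_pow hk : (0:ℝ) ^ e k = 0))

lemma sumsq_eq_zero {p : ℕ} (α : Fin p → ℝ) (h : ∑ i, (α i) ^ 2 = 0) : α = 0 := by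
  funext i
  have := (Finset.sum_eq_zero_iff_of_nonneg (fun i _ => sq_nonneg (α i))).mp h i
    (Finset.mem_univ i)
  exact (pow_eq_zero_iff (by norm_num : (2:ℕ) ≠ 0)).mp this

lemma sum_mono_zero {p k n : ℕ} (M : Matrix (Fin p) (Fin k) ℕ)
    (hM : ∀ i, (fun a => M a i) ≠ 0) (N : Matrix (Fin n) (Fin k) ℝ) :
    (∑ i, mono (0 : Fin p → ℝ) (fun a => M a i) • (fun j => N j i)) = 0 :=
  Finset.sum_eq_zero fun i _ => by rw [mono_zero_of_ne _ (hM i), zero_smul]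

/-- The union of two CPZs with regular exponent and constraint exponent matrices is again
a CPZ, obtained with two switching factors α₁, α₂ and the constraints of the paper's
union construction. -/
theorem CPZ_union {n p₁ p₂ h₁ h₂ m₁ m₂ q₁ q₂ : ℕ} (hp₁ : 1 ≤ p₁) (hp₂ : 1 ≤ p₂)
    (c₁ : Fin n → ℝ) (G₁ : Matrix (Fin n) (Fin h₁) ℝ) (E₁ : Matrix (Fin p₁) (Fin h₁) ℕ)
    (A₁ : Matrix (Fin m₁) (Fin q₁) ℝ) (b₁ : Fin m₁ → ℝ) (R₁ : Matrix (Fin p₁) (Fin q₁) ℕ)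
    (c₂ : Fin n → ℝ) (G₂ : Matrix (Fin n) (Fin h₂) ℝ) (E₂ : Matrix (Fin p₂) (Fin h₂) ℕ)
    (A₂ : Matrix (Fin m₂) (Fin q₂) ℝ) (b₂ : Fin m₂ → ℝ) (R₂ : Matrix (Fin p₂) (Fin q₂) ℕ)
    (hE₁ : (∀ i, (fun k => E₁ k i) ≠ 0) ∧
      ∀ i j, i ≠ j → (fun k => E₁ k i) ≠ (fun k => E₁ k j))
    (hE₂ : (∀ i, (fun k => E₂ k i) ≠ 0) ∧
      ∀ i j, i ≠ j → (fun k => E₂ k i) ≠ (fun k => E₂ k j))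
    (hR₁ : (∀ i, (fun k => R₁ k i) ≠ 0) ∧
      ∀ i j, i ≠ j → (fun k => R₁ k i) ≠ (fun k => R₁ k j))
    (hR₂ : (∀ i, (fun k => R₂ k i) ≠ 0) ∧
      ∀ i j, i ≠ j → (fun k => R₂ k i) ≠ (fun k => R₂ k j)) :
    {x : Fin n → ℝ | ∃ a₁ a₂ : ℝ, ∃ α : Fin p₁ → ℝ, ∃ β : Fin p₂ → ℝ,
      a₁ ∈ Set.Icc (-1 : ℝ) 1 ∧ a₂ ∈ Set.Icc (-1 : ℝ) 1 ∧ inBox α ∧ inBox β ∧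
      a₁ * a₂ = 1 ∧
      (1 + a₁ + (1 / 2) * ((1 / (p₁ : ℝ)) * ∑ i, (α i) ^ 2) * (1 - a₁)) *
          (1 - (1 / 2) * ((1 / (p₂ : ℝ)) * ∑ j, (β j) ^ 2)) - a₂ - 1 = 0 ∧
      (∑ i, mono α (fun k => R₁ k i) • (fun j => A₁ j i)) =
        (1 / 2 : ℝ) • b₁ + ((1 / 2) * a₁) • b₁ ∧
      (∑ i, mono β (fun k => R₂ k i) • (fun j => A₂ j i)) =
        (1 / 2 : ℝ) • b₂ - ((1 / 2) * a₁) • b₂ ∧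
      x = (1 / 2 : ℝ) • (c₁ + c₂) + ((1 / 2) * a₁) • (c₁ - c₂)
            + ∑ i, mono α (fun k => E₁ k i) • (fun j => G₁ j i)
            + ∑ i, mono β (fun k => E₂ k i) • (fun j => G₂ j i)} =
    CPZ c₁ G₁ E₁ A₁ b₁ R₁ ∪ CPZ c₂ G₂ E₂ A₂ b₂ R₂ := by
  ext x
  simp only [Set.mem_setOf_eq, Set.mem_union, CPZ]
  constructor
  · rintro ⟨a₁, a₂, α, β, ha₁, ha₂, hα, hβ, hmul, hg, hc₁, hc₂, hx⟩
    -- |a₁| = 1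
    have ha₁ne : a₁ = 1 ∨ a₁ = -1 := by
      have h1 : |a₁| * |a₂| = 1 := by rw [← abs_mul, hmul, abs_one]
      have h2 : |a₁| ≤ 1 := abs_le.mpr ⟨ha₁.1, ha₁.2⟩
      have h3 : |a₂| ≤ 1 := abs_le.mpr ⟨ha₂.1, ha₂.2⟩
      have h4 : |a₁| = 1 := by nlinarith [abs_nonneg a₁, abs_nonneg a₂]
      rcases abs_eq (by norm_num : (0:ℝ) ≤ 1) |>.mp h4 with h | h
      · exact Or.inl h
      · exact Or.inr h
    rcases ha₁ne with h1 | h1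
    · -- a₁ = 1, a₂ = 1, β = 0
      have h2 : a₂ = 1 := by rw [h1, one_mul] at hmul; exact hmul
      subst h1; subst h2
      have hf₂ : ∑ j, (β j) ^ 2 = 0 := by
        have hp : (0:ℝ) < (p₂ : ℝ) := by exact_mod_cast hp₂
        have : (1 / (p₂:ℝ)) * ∑ j, (β j) ^ 2 = 0 := by nlinarith [hg]
        field_simp at this
        rw [mul_zero] at this
        exact this
      have hβ0 : β = 0 := sumsq_eq_zero β hf₂
      subst hβ0
      left
      refine ⟨α, hα, ?_, ?_⟩
      · rw [hc₁]; module
      · rw [hx, sum_mono_zero E₂ hE₂.1 G₂]; module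
    · -- a₁ = -1, a₂ = -1, α = 0
      have h2 : a₂ = -1 := by rw [h1] at hmul; linarith
      subst h1; subst h2
      have hF₂le : (1 / (p₂:ℝ)) * ∑ j, (β j) ^ 2 ≤ 1 := by
        have hp : (0:ℝ) < (p₂ : ℝ) := by exact_mod_cast hp₂
        have hb : ∑ j, (β j) ^ 2 ≤ (p₂ : ℝ) := by
          calc ∑ j, (β j) ^ 2 ≤ ∑ _j : Fin p₂, (1:ℝ) :=
                Finset.sum_le_sum fun j _ => by nlinarith [(hβ j).1, (hβ j).2]
            _ = (p₂ : ℝ) := by simp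
        rw [div_mul_eq_mul_div, one_mul, div_le_one hp]; exact hb
      have hf₁ : ∑ i, (α i) ^ 2 = 0 := by
        have hp : (0:ℝ) < (p₁ : ℝ) := by exact_mod_cast hp₁
        have key : ((1 / (p₁:ℝ)) * ∑ i, (α i) ^ 2) *
            (1 - (1 / 2) * ((1 / (p₂:ℝ)) * ∑ j, (β j) ^ 2)) = 0 := by
          linear_combination hg
        rcases mul_eq_zero.mp key with h | h
        · have := mul_eq_zero.mp h
          rcases this with h' | h'
          · exact absurd h' (by positivity)
          · exact h'
        · linarith
      have hα0 : α = 0 := sumsq_eq_zero α hf₁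
      subst hα0
      right
      refine ⟨β, hβ, ?_, ?_⟩
      · rw [hc₂]; module
      · rw [hx, sum_mono_zero E₁ hE₁.1 G₁]; module
  · have hsum0₂ : ∀ (k : ℕ) (M : Matrix (Fin p₂) (Fin k) ℕ)
        (hM : ∀ i, (fun a => M a i) ≠ 0) (N : Matrix (Fin n) (Fin k) ℝ),
        (∑ i, mono (0 : Fin p₂ → ℝ) (fun a => M a i) • (fun j => N j i)) = 0 := by
      intro k M hM N
      exact Finset.sum_eq_zero fun i _ => by rw [mono_zero_of_ne _ (hM i), zero_smul]
    rintro (⟨α, hα, hcon, hx⟩ | ⟨β, hβ, hcon, hx⟩)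
    · refine ⟨1, 1, α, 0, by norm_num, by norm_num, hα,
        fun k => by norm_num, by norm_num, by simp, ?_, ?_, ?_⟩
      · rw [hcon]; module
      · rw [sum_mono_zero R₂ hR₂.1 A₂]; module
      · rw [hx, sum_mono_zero E₂ hE₂.1 G₂]; module
    · refine ⟨-1, -1, 0, β, by norm_num, by norm_num,
        fun k => by norm_num, hβ, by norm_num, by simp, ?_, ?_, ?_⟩
      · rw [sum_mono_zero R₁ hR₁.1 A₁]; module
      · rw [hcon]; module
      · rw [hx, sum_mono_zero E₁ hE₁.1 G₁]; module
end
end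

section
/- For the combined constraint system with factor domain restriction, the feasible factor set of the union construction is D = D₁ ∪ D₂ where D₁ = {1}×{1}×[-1,1]^{p₁}×{0}^{p₂} and D₂ = {-1}×{-1}×{0}^{p₁}×[-1,1]^{p₂}: i.e., { α ∈ [-1,1]^{p₁+p₂+2} : α₁α₂ = 1 and (1 + α₁ + ½f₁(α)(1-α₁))(1 - ½f₂(α)) - α₂ - 1 = 0 } = D₁ ∪ D₂, where f₁(α) = (1/p₁)Σ_{i=3}^{p₁+2} α_i² and f₂(α) = (1/p₂)Σ_{i=p₁+3}^{p₁+p₂+2} α_i². -/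
lemma sum_sq_zero {n : ℕ} {f : Fin n → ℝ} (h : ∑ i, (f i) ^ 2 = 0) : f = 0 := by
  funext i
  have := (Finset.sum_eq_zero_iff_of_nonneg (fun i _ => sq_nonneg (f i))).mp h i
    (Finset.mem_univ i)
  simpa using pow_eq_zero_iff (n := 2) (by norm_num) |>.mp this

lemma sum_sq_le {n : ℕ} {f : Fin n → ℝ} (h : ∀ i, f i ∈ Set.Icc (-1 : ℝ) 1) :
    ∑ i, (f i) ^ 2 ≤ n := by
  calc ∑ i, (f i) ^ 2 ≤ ∑ _i : Fin n, (1 : ℝ) := by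
        apply Finset.sum_le_sum
        intro i _
        have := abs_le.mpr ⟨(h i).1, (h i).2⟩
        calc (f i) ^ 2 = |f i| ^ 2 := (sq_abs _).symm
          _ ≤ 1 ^ 2 := pow_le_pow_left₀ (abs_nonneg _) this 2
          _ = 1 := one_pow 2
    _ = n := by simp

/-- Feasible factor set of the union construction: the two switching constraints restrict
the factor domain to D₁ ∪ D₂. -/
theorem union_factor_domain {p₁ p₂ : ℕ} (hp₁ : 1 ≤ p₁) (hp₂ : 1 ≤ p₂) :
    {q : ℝ × ℝ × (Fin p₁ → ℝ) × (Fin p₂ → ℝ) |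
        q.1 ∈ Set.Icc (-1 : ℝ) 1 ∧ q.2.1 ∈ Set.Icc (-1 : ℝ) 1 ∧
        (∀ i, q.2.2.1 i ∈ Set.Icc (-1 : ℝ) 1) ∧ (∀ j, q.2.2.2 j ∈ Set.Icc (-1 : ℝ) 1) ∧
        q.1 * q.2.1 = 1 ∧
        (1 + q.1 + (1 / 2) * ((1 / (p₁ : ℝ)) * ∑ i, (q.2.2.1 i) ^ 2) * (1 - q.1)) *
            (1 - (1 / 2) * ((1 / (p₂ : ℝ)) * ∑ j, (q.2.2.2 j) ^ 2)) - q.2.1 - 1 = 0} =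
    {q : ℝ × ℝ × (Fin p₁ → ℝ) × (Fin p₂ → ℝ) |
        q.1 = 1 ∧ q.2.1 = 1 ∧ (∀ i, q.2.2.1 i ∈ Set.Icc (-1 : ℝ) 1) ∧ q.2.2.2 = 0} ∪
    {q : ℝ × ℝ × (Fin p₁ → ℝ) × (Fin p₂ → ℝ) |
        q.1 = -1 ∧ q.2.1 = -1 ∧ q.2.2.1 = 0 ∧ (∀ j, q.2.2.2 j ∈ Set.Icc (-1 : ℝ) 1)} := by
  have hp₁' : (0 : ℝ) < p₁ := by exact_mod_cast hp₁
  have hp₂' : (0 : ℝ) < p₂ := by exact_mod_cast hp₂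
  ext ⟨a, b, x, y⟩
  simp only [Set.mem_setOf_eq, Set.mem_union]
  constructor
  · rintro ⟨ha, hb, hx, hy, hab, hcon⟩
    -- a*b = 1 with |a|,|b| ≤ 1 forces a = b = ±1
    have ha1 : |a| ≤ 1 := abs_le.mpr ⟨ha.1, ha.2⟩
    have hb1 : |b| ≤ 1 := abs_le.mpr ⟨hb.1, hb.2⟩
    have habs : |a| = 1 := by
      have h1 : (1 : ℝ) = |a| * |b| := by rw [← abs_mul, hab, abs_one]
      nlinarith [abs_nonneg a, abs_nonneg b]
    rcases abs_eq (by norm_num : (0:ℝ) ≤ 1) |>.mp habs with h | h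
    · -- a = 1, so b = 1
      have hb' : b = 1 := by rw [h, one_mul] at hab; exact hab
      left
      refine ⟨h, hb', hx, ?_⟩
      -- constraint forces ∑ y² = 0
      rw [h, hb'] at hcon
      have hsum : ∑ j, (y j) ^ 2 = 0 := by
        field_simp at hcon
        have h4 : (p₁ : ℝ) * ∑ j, (y j) ^ 2 = 0 := by linear_combination (-1 / 4 : ℝ) * hcon
        exact (mul_eq_zero.mp h4).resolve_left hp₁'.ne'
      exact sum_sq_zero hsum
    · -- a = -1, so b = -1
      have hb' : b = -1 := by
        rw [h] at hab; nlinarith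
      right
      refine ⟨h, hb', ?_, hy⟩
      rw [h, hb'] at hcon
      have hle : (1 / (p₂ : ℝ)) * ∑ j, (y j) ^ 2 ≤ 1 := by
        have h1 : (1 / (p₂:ℝ)) * ∑ j, (y j)^2 ≤ (1 / (p₂:ℝ)) * p₂ :=
          mul_le_mul_of_nonneg_left (sum_sq_le hy) (by positivity)
        have h2 : (1 / (p₂:ℝ)) * p₂ = 1 := by field_simp
        linarith
      have hpos : (0:ℝ) < 1 - (1 / 2) * ((1 / (p₂ : ℝ)) * ∑ j, (y j) ^ 2) := by
        linarith
      have hsum1 : ∑ i, (x i) ^ 2 = 0 := by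
        have hf : ((1 / (p₁ : ℝ)) * ∑ i, (x i) ^ 2) *
            (1 - (1 / 2) * ((1 / (p₂ : ℝ)) * ∑ j, (y j) ^ 2)) = 0 := by
          nlinarith [hcon]
        rcases mul_eq_zero.mp hf with h' | h'
        · rcases mul_eq_zero.mp h' with h'' | h''
          · exact absurd h'' (by positivity)
          · exact h''
        · linarith
      exact sum_sq_zero hsum1
  · rintro (⟨ha, hb, hx, hy⟩ | ⟨ha, hb, hx, hy⟩)
    · subst ha hb hy
      refine ⟨by norm_num, by norm_num, hx, by simp, by norm_num, ?_⟩
      simp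
    · subst ha hb hx
      refine ⟨by norm_num, by norm_num, by simp, hy, by norm_num, ?_⟩
      simp
end
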